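/- Moyal's identity: for Schwartz functions f₁, g₁, f₂, g₂ : ℝ → ℂ, ⟨W(f₁,g₁), W(f₂,g₂)⟩_{L²(ℝ²)} = conj(⟨f₁,f₂⟩) · ⟨g₁,g₂⟩. -/

import Mathlib

open MeasureTheory

/-- One-dimensional Wigner transform. -/
noncomputable def Wig (f g : ℝ → ℂ) (x ξ : ℝ) : ℂ :=
  (Real.sqrt (2 * Real.pi) : ℂ)⁻¹ *
    ∫ p : ℝ, Complex.exp (Complex.I * p * ξ) *
      (starRingEnd ℂ) (f ((x + p) / Real.sqrt 2)) * g ((x - p) / Real.sqrt 2)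

/-- Extended Wigner transform of a function of two variables. -/
noncomputable def ExtW (F : ℝ → ℝ → ℂ) (x ξ : ℝ) : ℂ :=
  (Real.sqrt (2 * Real.pi) : ℂ)⁻¹ *
    ∫ p : ℝ, Complex.exp (Complex.I * p * ξ) *
      F ((x + p) / Real.sqrt 2) ((x - p) / Real.sqrt 2)

/-- The n-th Hermite function. -/
noncomputable def hermiteFun (n : ℕ) (x : ℝ) : ℝ :=
  Real.pi ^ (-(1/4 : ℝ)) * ((Nat.factorial n : ℝ)) ^ (-(1/2 : ℝ)) *
    (2 : ℝ) ^ (-(n : ℝ)/2) * (-1 : ℝ)^n * Real.exp (x^2/2) *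
    iteratedDeriv n (fun t => Real.exp (-t^2)) x

/-- Generalized Laguerre polynomial via the Rodrigues formula. -/
noncomputable def lagPoly (n α : ℕ) (x : ℝ) : ℝ :=
  Real.exp x / (Nat.factorial n * x ^ α) *
    iteratedDeriv n (fun t => Real.exp (-t) * t ^ (n + α)) x

/-- Two-dimensional Wigner transform. -/
noncomputable def Wig2 (f g : ℝ × ℝ → ℂ) (x ξ : ℝ × ℝ) : ℂ :=
  (2 * Real.pi : ℂ)⁻¹ * ∫ p : ℝ × ℝ,
    Complex.exp (Complex.I * (p.1 * ξ.1 + p.2 * ξ.2)) *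
    (starRingEnd ℂ) (f ((x.1 + p.1) / Real.sqrt 2, (x.2 + p.2) / Real.sqrt 2)) *
    g ((x.1 - p.1) / Real.sqrt 2, (x.2 - p.2) / Real.sqrt 2)


section MoyalAux
open FourierTransform SchwartzMap Convolution

noncomputable def conjMulCLM : ℂ →L[ℝ] ℂ →L[ℝ] ℂ :=
  (ContinuousLinearMap.mul ℝ ℂ).comp (Complex.conjCLE.toContinuousLinearMap)

lemma schwartz_htg (f : SchwartzMap ℝ ℂ) : Function.HasTemperateGrowth ⇑f :=
  ⟨f.smooth ⊤, fun n => ⟨0, SchwartzMap.seminorm ℝ 0 n f, fun x => by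
    simpa using SchwartzMap.norm_iteratedFDeriv_le_seminorm ℝ f n x⟩⟩

lemma htg_affine (m c : ℝ) : Function.HasTemperateGrowth (fun p : ℝ => m * p + c) := by
  apply Function.HasTemperateGrowth.of_fderiv (k := 1) (C := |m| + |c|)
  · have h : (fderiv ℝ (fun p : ℝ => m * p + c)) =
        fun _ => ContinuousLinearMap.smulRight (1 : ℝ →L[ℝ] ℝ) m := by
      funext p
      have : HasDerivAt (fun p : ℝ => m * p + c) m p := by
        simpa using ((hasDerivAt_id p).const_mul m).add_const c
      rw [this.hasFDerivAt.fderiv, ContinuousLinearMap.smulRight_one_eq_toSpanSingleton]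
    rw [h]
    exact .const _
  · fun_prop
  · intro p
    have := abs_add_le (m * p) c
    simp only [Real.norm_eq_abs, abs_mul, pow_one]
    nlinarith [abs_nonneg p, abs_nonneg m, abs_nonneg c, abs_mul m p]

noncomputable def affineCompCLM (m c : ℝ) (hm : m ≠ 0) :
    SchwartzMap ℝ ℂ →L[ℝ] SchwartzMap ℝ ℂ :=
  SchwartzMap.compCLM ℝ (htg_affine m c)
    ⟨1, (1 + |c|) / |m|, fun p => by
      have hm' : 0 < |m| := abs_pos.mpr hm
      have h1 : |m| * |p| = |m * p + c - c| := by rw [← abs_mul]; ring_nf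
      have h2 : |m * p + c - c| ≤ |m * p + c| + |c| := abs_sub _ _
      rw [Real.norm_eq_abs, Real.norm_eq_abs, pow_one, div_mul_eq_mul_div, le_div_iff₀ hm']
      nlinarith [abs_nonneg (m * p + c), abs_nonneg c, abs_nonneg p]⟩

lemma sqrt2_ne : Real.sqrt 2 ≠ 0 := by positivity

noncomputable def wigAux (f g : SchwartzMap ℝ ℂ) (x : ℝ) : SchwartzMap ℝ ℂ :=
  SchwartzMap.bilinLeftCLM conjMulCLM
    (schwartz_htg ((affineCompCLM (-(Real.sqrt 2)⁻¹) (x / Real.sqrt 2)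
      (by simpa using sqrt2_ne) g)))
    ((affineCompCLM (Real.sqrt 2)⁻¹ (x / Real.sqrt 2) (inv_ne_zero sqrt2_ne)) f)

lemma wigAux_apply (f g : SchwartzMap ℝ ℂ) (x p : ℝ) :
    wigAux f g x p = (starRingEnd ℂ) (f ((x + p) / Real.sqrt 2)) * g ((x - p) / Real.sqrt 2) := by
  show (starRingEnd ℂ) (f ((Real.sqrt 2)⁻¹ * p + x / Real.sqrt 2)) *
      g (-(Real.sqrt 2)⁻¹ * p + x / Real.sqrt 2) = _
  congr 2
  · field_simp; ring
  · field_simp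
    linear_combination (0:ℝ) * Real.mul_self_sqrt (by norm_num : (0:ℝ) ≤ 2)

noncomputable def conjS : SchwartzMap ℝ ℂ →L[ℝ] SchwartzMap ℝ ℂ :=
  SchwartzMap.bilinLeftCLM conjMulCLM (Function.HasTemperateGrowth.const (1 : ℂ))

lemma conjS_apply (f : SchwartzMap ℝ ℂ) (p : ℝ) : conjS f p = (starRingEnd ℂ) (f p) := by
  show (starRingEnd ℂ) (f p) * 1 = _
  rw [mul_one]

noncomputable def mulConjS (a b : SchwartzMap ℝ ℂ) : SchwartzMap ℝ ℂ :=
  SchwartzMap.bilinLeftCLM conjMulCLM (schwartz_htg b) a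

lemma mulConjS_apply (a b : SchwartzMap ℝ ℂ) (t : ℝ) :
    mulConjS a b t = (starRingEnd ℂ) (a t) * b t := rfl

lemma fourier_conj (u : ℝ → ℂ) (ξ : ℝ) :
    𝓕 (fun p => (starRingEnd ℂ) (u p)) ξ = (starRingEnd ℂ) (𝓕 u (-ξ)) := by
  rw [Real.fourier_eq', Real.fourier_eq', ← integral_conj]
  refine integral_congr_ae (Filter.Eventually.of_forall fun p => ?_)
  simp only [smul_eq_mul, map_mul, ← Complex.exp_conj, map_neg, Complex.conj_I,
    Complex.conj_ofReal, map_mul]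
  congr 2
  rw [inner_neg_right]
  push_cast
  ring

lemma innerℝ_flip : (innerₗ ℝ).flip = innerₗ ℝ :=
  LinearMap.ext₂ fun x y => real_inner_comm x y

lemma fourierInv_integrable (v : SchwartzMap ℝ ℂ) : Integrable (𝓕⁻ ⇑v) := by
  have h := ((SchwartzMap.fourierTransformCLM ℝ v).integrable (μ := volume)).comp_neg
  simp only [SchwartzMap.fourierTransformCLM_apply] at h
  exact h.congr (Filter.Eventually.of_forall fun w =>
    (Real.fourierInv_eq_fourier_neg (⇑v) w).symm)

lemma parseval (u v : SchwartzMap ℝ ℂ) :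
    ∫ ξ : ℝ, (starRingEnd ℂ) (𝓕 ⇑u ξ) * 𝓕 ⇑v ξ = ∫ p : ℝ, (starRingEnd ℂ) (u p) * v p := by
  have hcu : ⇑(conjS u) = fun p => (starRingEnd ℂ) (u p) := funext (conjS_apply u)
  have h1 : ∀ ξ : ℝ, (starRingEnd ℂ) (𝓕 ⇑u ξ) = 𝓕 ⇑(conjS u) (-ξ) := by
    intro ξ
    rw [hcu, fourier_conj, neg_neg]
  have hL : Continuous fun p : ℝ × ℝ => (innerₗ ℝ) p.1 p.2 := by
    simp
    fun_prop
  calc ∫ ξ : ℝ, (starRingEnd ℂ) (𝓕 ⇑u ξ) * 𝓕 ⇑v ξ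
      = ∫ ξ : ℝ, 𝓕 ⇑(conjS u) (-ξ) * 𝓕 ⇑v ξ := by simp_rw [h1]
    _ = ∫ ξ : ℝ, 𝓕 ⇑(conjS u) ξ * 𝓕 ⇑v (-ξ) := by
        rw [← integral_neg_eq_self (fun ξ : ℝ => 𝓕 (⇑(conjS u)) ξ * 𝓕 (⇑v) (-ξ)) volume]
        simp
    _ = ∫ ξ : ℝ, 𝓕 ⇑(conjS u) ξ * (𝓕⁻ ⇑v) ξ := by
        simp_rw [Real.fourierInv_eq_fourier_neg]
    _ = ∫ x : ℝ, (conjS u) x * 𝓕 (𝓕⁻ ⇑v) x := by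
        have := VectorFourier.integral_bilin_fourierIntegral_eq_flip
          (ContinuousLinearMap.mul ℂ ℂ) Real.continuous_fourierChar hL
          ((conjS u).integrable (μ := volume)) (fourierInv_integrable v)
        rw [innerℝ_flip] at this
        exact this
    _ = ∫ p : ℝ, (starRingEnd ℂ) (u p) * v p := by
        rw [Continuous.fourier_fourierInv_eq v.continuous (v.integrable (μ := volume))
          ((SchwartzMap.fourierTransformCLM ℝ v).integrable (μ := volume))]
        simp_rw [conjS_apply]

lemma wig_eq (f g : SchwartzMap ℝ ℂ) (x ξ : ℝ) :
    Wig ⇑f ⇑g x ξ = (Real.sqrt (2 * Real.pi) : ℂ)⁻¹ *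
      𝓕 ⇑(wigAux f g x) (-(2 * Real.pi)⁻¹ * ξ) := by
  rw [Wig, Real.fourier_eq']
  congr 1
  refine integral_congr_ae (Filter.Eventually.of_forall fun p => ?_)
  dsimp only
  rw [smul_eq_mul, wigAux_apply]
  have harg : (-2 * Real.pi * (inner ℝ p (-(2 * Real.pi)⁻¹ * ξ) : ℝ) : ℝ) = p * ξ := by
    have : (inner ℝ p (-(2 * Real.pi)⁻¹ * ξ) : ℝ) = p * (-(2 * Real.pi)⁻¹ * ξ) := by simp [mul_comm]
    rw [this]
    field_simp
  rw [harg]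
  rw [show ((p * ξ : ℝ) : ℂ) * Complex.I = Complex.I * p * ξ from by
    rw [Complex.ofReal_mul]; ring]
  ring

lemma inner_integral (f₁ g₁ f₂ g₂ : SchwartzMap ℝ ℂ) (x : ℝ) :
    ∫ ξ : ℝ, (starRingEnd ℂ) (Wig ⇑f₁ ⇑g₁ x ξ) * Wig ⇑f₂ ⇑g₂ x ξ
      = ∫ p : ℝ, (starRingEnd ℂ) (wigAux f₁ g₁ x p) * wigAux f₂ g₂ x p := by
  have hc : ((Real.sqrt (2 * Real.pi) : ℂ))⁻¹ * ((Real.sqrt (2 * Real.pi) : ℂ))⁻¹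
      = (((2 * Real.pi : ℝ) : ℂ))⁻¹ := by
    rw [← mul_inv]
    norm_cast
    rw [Real.mul_self_sqrt (by positivity)]
  have hconjc : (starRingEnd ℂ) ((Real.sqrt (2 * Real.pi) : ℂ))⁻¹
      = ((Real.sqrt (2 * Real.pi) : ℂ))⁻¹ := by
    rw [map_inv₀, Complex.conj_ofReal]
  set Φ : ℝ → ℂ := fun u =>
    (starRingEnd ℂ) (𝓕 ⇑(wigAux f₁ g₁ x) u) * 𝓕 ⇑(wigAux f₂ g₂ x) u with hΦ
  calc ∫ ξ : ℝ, (starRingEnd ℂ) (Wig ⇑f₁ ⇑g₁ x ξ) * Wig ⇑f₂ ⇑g₂ x ξ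
      = ∫ ξ : ℝ, (((2 * Real.pi : ℝ) : ℂ))⁻¹ * Φ (-(2 * Real.pi)⁻¹ * ξ) := by
        refine integral_congr_ae (Filter.Eventually.of_forall fun ξ => ?_)
        dsimp only
        rw [wig_eq, wig_eq, map_mul, hconjc, hΦ]
        dsimp only
        rw [← hc]
        ring
    _ = (((2 * Real.pi : ℝ) : ℂ))⁻¹ * ∫ ξ : ℝ, Φ (-(2 * Real.pi)⁻¹ * ξ) :=
        integral_const_mul _ _
    _ = (((2 * Real.pi : ℝ) : ℂ))⁻¹ * ((2 * Real.pi : ℝ) • ∫ u : ℝ, Φ u) := by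
        rw [MeasureTheory.Measure.integral_comp_mul_left Φ (-(2 * Real.pi)⁻¹)]
        congr 1
        rw [inv_neg, inv_inv, abs_neg, abs_of_pos (by positivity)]
    _ = ∫ u : ℝ, Φ u := by
        rw [Complex.real_smul]
        rw [← mul_assoc, inv_mul_cancel₀ (Complex.ofReal_ne_zero.mpr (by positivity)), one_mul]
    _ = ∫ p : ℝ, (starRingEnd ℂ) (wigAux f₁ g₁ x p) * wigAux f₂ g₂ x p :=
        parseval _ _

lemma outer (F G : SchwartzMap ℝ ℂ) :
    ∫ x : ℝ, ∫ p : ℝ, F ((x + p) / Real.sqrt 2) * G ((x - p) / Real.sqrt 2)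
      = (∫ t : ℝ, F t) * (∫ t : ℝ, G t) := by
  have h2 : Real.sqrt 2 * Real.sqrt 2 = 2 := Real.mul_self_sqrt (by norm_num)
  have key : ∀ x : ℝ, (∫ p : ℝ, F ((x + p) / Real.sqrt 2) * G ((x - p) / Real.sqrt 2))
      = Real.sqrt 2 • (⇑F ⋆[ContinuousLinearMap.mul ℂ ℂ] ⇑G) (Real.sqrt 2 * x) := by
    intro x
    have t1 : (∫ p : ℝ, F ((x + p) / Real.sqrt 2) * G ((x - p) / Real.sqrt 2))
        = ∫ p : ℝ, F ((x + (p - x)) / Real.sqrt 2) * G ((x - (p - x)) / Real.sqrt 2) :=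
      (integral_sub_right_eq_self
        (fun p => F ((x + p) / Real.sqrt 2) * G ((x - p) / Real.sqrt 2)) x).symm
    rw [t1]
    have t2 : ∀ p : ℝ, F ((x + (p - x)) / Real.sqrt 2) * G ((x - (p - x)) / Real.sqrt 2)
        = (fun t => F t * G (Real.sqrt 2 * x - t)) ((Real.sqrt 2)⁻¹ * p) := by
      intro p
      have a1 : (x + (p - x)) / Real.sqrt 2 = (Real.sqrt 2)⁻¹ * p := by
        rw [show x + (p - x) = p from by ring, div_eq_inv_mul]
      have a2 : (x - (p - x)) / Real.sqrt 2 = Real.sqrt 2 * x - (Real.sqrt 2)⁻¹ * p := by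
        field_simp
        linear_combination (-x) * Real.mul_self_sqrt (show (0:ℝ) ≤ 2 by norm_num)
      dsimp only
      rw [a1, a2]
    rw [integral_congr_ae (Filter.Eventually.of_forall t2),
      MeasureTheory.Measure.integral_comp_inv_mul_left
        (fun t => F t * G (Real.sqrt 2 * x - t)) (Real.sqrt 2),
      abs_of_pos (by positivity : (0:ℝ) < Real.sqrt 2)]
    congr 1
  rw [integral_congr_ae (Filter.Eventually.of_forall key), integral_smul,
    MeasureTheory.Measure.integral_comp_mul_left
      (⇑F ⋆[ContinuousLinearMap.mul ℂ ℂ] ⇑G) (Real.sqrt 2),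
    abs_of_pos (by positivity : (0:ℝ) < (Real.sqrt 2)⁻¹), smul_smul,
    mul_inv_cancel₀ sqrt2_ne, one_smul,
    integral_convolution (ContinuousLinearMap.mul ℂ ℂ) (F.integrable (μ := volume))
      (G.integrable (μ := volume))]
  rfl

end MoyalAux


/-- Moyal's identity. -/
theorem moyal_identity (f₁ g₁ f₂ g₂ : SchwartzMap ℝ ℂ) :
    (∫ x : ℝ, ∫ ξ : ℝ, (starRingEnd ℂ) (Wig (⇑f₁) (⇑g₁) x ξ) * Wig (⇑f₂) (⇑g₂) x ξ)
      = (starRingEnd ℂ) (∫ t : ℝ, (starRingEnd ℂ) (f₁ t) * f₂ t) *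
        ∫ t : ℝ, (starRingEnd ℂ) (g₁ t) * g₂ t := by
  calc (∫ x : ℝ, ∫ ξ : ℝ, (starRingEnd ℂ) (Wig (⇑f₁) (⇑g₁) x ξ) * Wig (⇑f₂) (⇑g₂) x ξ)
      = ∫ x : ℝ, ∫ p : ℝ, (starRingEnd ℂ) (wigAux f₁ g₁ x p) * wigAux f₂ g₂ x p :=
        integral_congr_ae (Filter.Eventually.of_forall fun x => inner_integral f₁ g₁ f₂ g₂ x)
    _ = ∫ x : ℝ, ∫ p : ℝ, (mulConjS f₂ f₁) ((x + p) / Real.sqrt 2)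
          * (mulConjS g₁ g₂) ((x - p) / Real.sqrt 2) := by
        refine integral_congr_ae (Filter.Eventually.of_forall fun x => ?_)
        refine integral_congr_ae (Filter.Eventually.of_forall fun p => ?_)
        dsimp only
        rw [wigAux_apply, wigAux_apply, mulConjS_apply, mulConjS_apply, map_mul,
          Complex.conj_conj]
        ring
    _ = (∫ t : ℝ, (mulConjS f₂ f₁) t) * (∫ t : ℝ, (mulConjS g₁ g₂) t) :=
        outer (mulConjS f₂ f₁) (mulConjS g₁ g₂)
    _ = (starRingEnd ℂ) (∫ t : ℝ, (starRingEnd ℂ) (f₁ t) * f₂ t) *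
        ∫ t : ℝ, (starRingEnd ℂ) (g₁ t) * g₂ t := by
        rw [← integral_conj]
        congr 1
        all_goals refine integral_congr_ae (Filter.Eventually.of_forall fun t => ?_)
        all_goals simp only [mulConjS_apply, map_mul, Complex.conj_conj]
        all_goals ring
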